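/- Let Γ be a well-ordered additive submonoid of the nonnegative part of a totally ordered abelian group Φ. Then Γ is combinatorially finite: for every γ ∈ Γ, the number of finite sequences (γ₁, …, γ_n) of strictly positive elements of Γ with γ₁ + ⋯ + γ_n = γ is finite. -/

import Mathlib

/-- Campillo–Galindo: a well-ordered submonoid `Γ` of the nonnegative part of a
totally ordered abelian group is combinatorially finite: every `γ ∈ Γ` has only
finitely many representations as a sum of a finite sequence of strictly positive
elements of `Γ`. -/
theorem combinatorially_finite (Φ : Type*) [AddCommGroup Φ] [LinearOrder Φ] [IsOrderedAddMonoid Φ]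
    (Γ : AddSubmonoid Φ) (hpos : ∀ x ∈ Γ, 0 ≤ x) (hwo : (Γ : Set Φ).IsWF)
    (γ : Φ) (hγ : γ ∈ Γ) :
    {l : List Φ | (∀ x ∈ l, x ∈ Γ ∧ 0 < x) ∧ l.sum = γ}.Finite := by
  refine Set.WellFoundedOn.induction hwo hγ
    (P := fun γ => {l : List Φ | (∀ x ∈ l, x ∈ Γ ∧ 0 < x) ∧ l.sum = γ}.Finite) ?_
  clear hγ γ
  intro γ hγ IH
  -- finite set of possible first elements
  have hanti : (Set.antidiagonal (Γ : Set Φ) (Γ : Set Φ) γ).Finite :=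
    Set.AddAntidiagonal.finite_of_isWF hwo hwo γ
  set F : Set Φ := Prod.fst '' (Set.antidiagonal (Γ : Set Φ) (Γ : Set Φ) γ) with hF
  have hFfin : F.Finite := hanti.image _
  have key : {l : List Φ | (∀ x ∈ l, x ∈ Γ ∧ 0 < x) ∧ l.sum = γ} ⊆
      insert ([] : List Φ)
        (⋃ x ∈ F ∩ {x | 0 < x}, List.cons x ''
          {l : List Φ | (∀ y ∈ l, y ∈ Γ ∧ 0 < y) ∧ l.sum = γ - x}) := by
    rintro l ⟨hl, hsum⟩
    cases l with
    | nil => exact Set.mem_insert _ _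
    | cons a t =>
      right
      have ha := hl a List.mem_cons_self
      have htΓ : t.sum ∈ Γ := by
        refine AddSubmonoid.list_sum_mem Γ fun y hy => (hl y (List.mem_cons_of_mem a hy)).1
      have hsum' : a + t.sum = γ := by simpa using hsum
      refine Set.mem_biUnion ⟨⟨(a, t.sum), ⟨ha.1, htΓ, hsum'⟩, rfl⟩, ha.2⟩ ?_
      exact ⟨t, ⟨fun y hy => hl y (List.mem_cons_of_mem a hy), by
        rw [eq_sub_iff_add_eq, add_comm, hsum']⟩, rfl⟩
  refine Set.Finite.subset (Set.Finite.insert _ ?_) key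
  refine Set.Finite.biUnion (hFfin.inter_of_left _) ?_
  rintro x ⟨hxF, hx0⟩
  obtain ⟨⟨a, b⟩, ⟨haΓ, hbΓ, hab⟩, rfl⟩ := hxF
  have hba : γ - a = b := by rw [eq_comm, eq_sub_iff_add_eq, add_comm, hab]
  refine Set.Finite.image _ ?_
  rw [Set.mem_setOf_eq] at hx0
  simp only at hx0 ⊢
  rw [hba]
  refine IH b hbΓ ?_
  calc b = 0 + b := (zero_add b).symm
    _ < a + b := by exact add_lt_add_left hx0 b
    _ = γ := hab
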